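/- In the special case A = m, for every q ≥ 0 the steady-state degree distribution exists and is given by lim_{t→∞} P(q,t) = 2m(m+1)/((q+m)(q+m+1)(q+m+2)); in particular q^3 · lim_{t→∞} P(q,t) → 2m(m+1) as q → ∞. -/

import Mathlib

open Finset Filter Topology



lemma aux_cesaro_step (u ε : ℕ → ℝ) (hε : Filter.Tendsto ε Filter.atTop (nhds 0))
    (h : ∀ᶠ t in Filter.atTop, |u (t+1)| ≤ |u t| + |ε t|) :
    Filter.Tendsto (fun t : ℕ => u t / t) Filter.atTop (nhds 0) := by
  obtain ⟨t0, h0⟩ := Filter.eventually_atTop.1 h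
  have key : ∀ t, t0 ≤ t → |u t| ≤ |u t0| + ∑ s ∈ Finset.range t, |ε s| := by
    intro t ht
    induction t with
    | zero =>
      have : t0 = 0 := Nat.le_zero.mp ht
      simp [this]
    | succ t ih =>
      rcases Nat.lt_or_ge t0 (t+1) with h1 | h1
      · have ht0t : t0 ≤ t := Nat.lt_succ_iff.mp h1
        calc |u (t+1)| ≤ |u t| + |ε t| := h0 t ht0t
          _ ≤ (|u t0| + ∑ s ∈ Finset.range t, |ε s|) + |ε t| := by linarith [ih ht0t]
          _ = |u t0| + ∑ s ∈ Finset.range (t+1), |ε s| := by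
              rw [Finset.sum_range_succ]; ring
      · have : t0 = t + 1 := le_antisymm ht h1
        rw [this]
        exact le_add_of_nonneg_right (Finset.sum_nonneg fun _ _ => abs_nonneg _)
  have hb : Filter.Tendsto (fun t : ℕ => |u t0| / t + (t : ℝ)⁻¹ * ∑ s ∈ Finset.range t, |ε s|)
      Filter.atTop (nhds 0) := by
    have h1 := tendsto_const_div_atTop_nhds_zero_nat |u t0|
    have h2 : Filter.Tendsto (fun t : ℕ => |ε t|) Filter.atTop (nhds 0) := by
      simpa using hε.abs
    simpa using h1.add h2.cesaro
  apply squeeze_zero_norm' _ hb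
  filter_upwards [Filter.eventually_ge_atTop t0, Filter.eventually_ge_atTop 1] with t ht ht1
  have htpos : (0 : ℝ) < t := by exact_mod_cast ht1
  have : ‖u t / t‖ = |u t| / t := by
    rw [Real.norm_eq_abs, abs_div, abs_of_pos htpos]
  rw [this]
  calc |u t| / t ≤ (|u t0| + ∑ s ∈ Finset.range t, |ε s|) / t :=
        by gcongr; exact key t ht
    _ = |u t0| / t + (t : ℝ)⁻¹ * ∑ s ∈ Finset.range t, |ε s| := by
        field_simp


lemma aux_linear_bound (u : ℕ → ℝ) (L : ℝ)
    (h : Filter.Tendsto (fun t : ℕ => u t / t) Filter.atTop (nhds L)) :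
    ∃ C : ℝ, 0 ≤ C ∧ ∀ t : ℕ, 1 ≤ t → |u t| ≤ C * t := by
  obtain ⟨t0, ht0⟩ := Metric.tendsto_atTop.mp h 1 one_pos
  refine ⟨|L| + 1 + ∑ s ∈ Finset.range (t0 + 1), |u s|, by positivity, ?_⟩
  intro t ht
  have htR : (1 : ℝ) ≤ t := by exact_mod_cast ht
  have htpos : (0 : ℝ) < t := by linarith
  set C := |L| + 1 + ∑ s ∈ Finset.range (t0 + 1), |u s| with hC
  have hCnn : 0 ≤ C := by positivity
  rcases Nat.lt_or_ge t t0 with hlt | hge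
  · have hmem : t ∈ Finset.range (t0 + 1) := Finset.mem_range.mpr (by omega)
    have h1 : |u t| ≤ ∑ s ∈ Finset.range (t0 + 1), |u s| :=
      Finset.single_le_sum (fun s _ => abs_nonneg (u s)) hmem
    have h2 : |u t| ≤ C := by
      rw [hC]; have : 0 ≤ |L| + 1 := by positivity
      linarith
    calc |u t| ≤ C := h2
      _ = C * 1 := (mul_one C).symm
      _ ≤ C * t := by gcongr
  · have hd := ht0 t hge
    rw [Real.dist_eq] at hd
    have h1 : |u t / t| ≤ |L| + 1 := by
      have := abs_sub_abs_le_abs_sub (u t / t) L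
      linarith [abs_abs (u t / t)]
    have h2 : |u t| = |u t / t| * t := by
      rw [abs_div, abs_of_pos htpos, div_mul_cancel₀ _ htpos.ne']
    rw [h2]
    have hsum : (0:ℝ) ≤ ∑ s ∈ Finset.range (t0 + 1), |u s| :=
      Finset.sum_nonneg fun s _ => abs_nonneg _
    have : |L| + 1 ≤ C := by rw [hC]; linarith
    calc |u t / t| * t ≤ (|L| + 1) * t := by gcongr
      _ ≤ C * t := by gcongr

-- second-order bound for (1-x)^m
lemma aux_pow_bound (m : ℕ) : ∀ x : ℝ, 0 ≤ x → x ≤ 1 →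
    |(1 - x) ^ m - 1 + m * x| ≤ (m : ℝ) ^ 2 * x ^ 2 := by
  induction m with
  | zero => intro x h0 h1; simp
  | succ m ih =>
    intro x h0 h1
    have hx : |1 - x| ≤ 1 := by rw [abs_le]; constructor <;> linarith
    have key : (1 - x) ^ (m + 1) - 1 + (m + 1 : ℕ) * x
        = (1 - x) * ((1 - x) ^ m - 1 + m * x) + m * x ^ 2 := by
      push_cast; ring
    rw [key]
    calc |(1 - x) * ((1 - x) ^ m - 1 + m * x) + m * x ^ 2|
        ≤ |1 - x| * |(1 - x) ^ m - 1 + m * x| + m * x ^ 2 := by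
          refine (abs_add_le _ _).trans ?_
          rw [abs_mul]
          have : |(m : ℝ) * x ^ 2| = m * x ^ 2 := abs_of_nonneg (by positivity)
          rw [this]
      _ ≤ 1 * ((m : ℝ) ^ 2 * x ^ 2) + m * x ^ 2 := by
          have := ih x h0 h1
          have h2 : |(1 - x) ^ m - 1 + ↑m * x| ≤ (m:ℝ)^2 * x^2 := this
          nlinarith [abs_nonneg ((1 - x) ^ m - 1 + (m:ℝ) * x), sq_nonneg x]
      _ ≤ ((m + 1 : ℕ) : ℝ) ^ 2 * x ^ 2 := by push_cast; nlinarith [sq_nonneg x]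

lemma aux_choose_le (m j : ℕ) : (m.choose j : ℝ) ≤ 2 ^ m := by
  rcases Nat.lt_or_ge m j with h | h
  · rw [Nat.choose_eq_zero_of_lt h]; norm_num
  · have : m.choose j ≤ 2 ^ m := by
      rw [← Nat.sum_range_choose m]
      exact Finset.single_le_sum (fun i _ => Nat.zero_le _)
        (Finset.mem_range.mpr (by omega))
    exact_mod_cast this

noncomputable def dmsN (P : ℕ → ℕ → ℕ → ℝ) (q t : ℕ) : ℝ := ∑ i ∈ Finset.Icc 1 t, P q i t

noncomputable def dmsP (m q : ℕ) : ℝ :=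
  2 * (m : ℝ) * ((m : ℝ) + 1) / (((q : ℝ) + m) * ((q : ℝ) + m + 1) * ((q : ℝ) + m + 2))

noncomputable def dmsX (m q j t : ℕ) : ℝ :=
  ((q : ℝ) - (j : ℝ) + (m : ℝ)) / (((m : ℝ) + (m : ℝ)) * t)

section lemmas
variable (m : ℕ) (hm : 1 ≤ m) (P : ℕ → ℕ → ℕ → ℝ)
    (hP11 : ∀ q : ℕ, P q 1 1 = if q = m then 1 else 0)
    (hPii : ∀ q i : ℕ, 2 ≤ i → P q i i = if q = 0 then 1 else 0)
    (hPrec : ∀ q i t : ℕ, 1 ≤ i → i ≤ t →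
      P q i (t + 1) = ∑ j ∈ Finset.Icc 0 (min m q),
        (m.choose j : ℝ) * (((q : ℝ) - (j : ℝ) + (m : ℝ)) / (((m : ℝ) + (m : ℝ)) * t)) ^ j *
          (1 - ((q : ℝ) - (j : ℝ) + (m : ℝ)) / (((m : ℝ) + (m : ℝ)) * t)) ^ (m - j) *
          P (q - j) i t)

include hm hP11 hPii hPrec in
lemma dms_support : ∀ t i q : ℕ, 1 ≤ i → i ≤ t → m * t < q → P q i t = 0 := by
  intro t
  induction t with
  | zero => intro i q h1 h2; omega
  | succ t ih =>
    intro i q h1 h2 hq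
    rcases Nat.lt_or_ge i (t + 1) with hi | hi
    · -- i ≤ t, use recurrence
      have hit : i ≤ t := Nat.lt_succ_iff.mp hi
      rw [hPrec q i t h1 hit]
      apply Finset.sum_eq_zero
      intro j hj
      have hjm : j ≤ m := le_trans (Finset.mem_Icc.mp hj).2 (min_le_left _ _)
      have hms : m * (t + 1) = m * t + m := by ring
      have : m * t < q - j := by omega
      rw [ih i (q - j) h1 hit this, mul_zero]
    · have hieq : i = t + 1 := le_antisymm h2 hi
      subst hieq
      rcases Nat.eq_zero_or_pos t with ht0 | htpos
      · subst ht0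
        rw [hP11 q]
        have : q ≠ m := by omega
        simp [this]
      · rw [hPii q (t + 1) (by omega)]
        have : q ≠ 0 := by
          have : 1 ≤ m * (t + 1) := Nat.one_le_iff_ne_zero.mpr (by positivity)
          omega
        simp [this]

include hP11 in
lemma dmsN_one (q : ℕ) : dmsN P q 1 = if q = m then 1 else 0 := by
  simp [dmsN, hP11 q]

include hm hP11 hPii hPrec in
lemma dmsN_supp : ∀ q t : ℕ, 1 ≤ t → m * t < q → dmsN P q t = 0 := by
  intro q t ht hq
  apply Finset.sum_eq_zero
  intro i hi
  obtain ⟨h1, h2⟩ := Finset.mem_Icc.mp hi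
  exact dms_support m hm P hP11 hPii hPrec t i q h1 h2 hq

include hPii hPrec in
lemma dmsN_rec (q t : ℕ) (ht : 1 ≤ t) :
    dmsN P q (t + 1) = (if q = 0 then 1 else 0) +
      ∑ j ∈ Finset.Icc 0 (min m q),
        (m.choose j : ℝ) * (dmsX m q j t) ^ j * (1 - dmsX m q j t) ^ (m - j) *
          dmsN P (q - j) t := by
  have h1 : dmsN P q (t + 1) = (∑ i ∈ Finset.Icc 1 t, P q i (t + 1)) + P q (t + 1) (t + 1) := by
    rw [dmsN, Finset.sum_Icc_succ_top (by omega)]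
  rw [h1, hPii q (t + 1) (by omega)]
  have h2 : ∑ i ∈ Finset.Icc 1 t, P q i (t + 1) =
      ∑ j ∈ Finset.Icc 0 (min m q),
        (m.choose j : ℝ) * (dmsX m q j t) ^ j * (1 - dmsX m q j t) ^ (m - j) *
          dmsN P (q - j) t := by
    have : ∀ i ∈ Finset.Icc 1 t, P q i (t + 1) =
        ∑ j ∈ Finset.Icc 0 (min m q),
          (m.choose j : ℝ) * (dmsX m q j t) ^ j * (1 - dmsX m q j t) ^ (m - j) * P (q - j) i t := by
      intro i hi
      obtain ⟨hi1, hi2⟩ := Finset.mem_Icc.mp hi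
      rw [hPrec q i t hi1 hi2]
      rfl
    rw [Finset.sum_congr rfl this, Finset.sum_comm]
    apply Finset.sum_congr rfl
    intro j _
    rw [dmsN, Finset.mul_sum]
  rw [h2]
  ring

include hm hP11 hPii hPrec in
lemma dms_key_step (q : ℕ) (B : ℝ) (hB : 0 ≤ B)
    (hsm : ∀ j, 1 ≤ j → j ≤ min m q → ∀ t, 1 ≤ t → |dmsN P (q - j) t| ≤ B * t) :
    ∀ t, 1 ≤ t → |dmsN P q t| ≤ (2 + (m : ℝ) * 2 ^ m * B * ((q : ℝ) + m)) * t := by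
  have hm0 : (0 : ℝ) < m := by exact_mod_cast hm
  have hm1 : (1 : ℝ) ≤ m := by exact_mod_cast hm
  set D : ℝ := 1 + (m : ℝ) * 2 ^ m * B * ((q : ℝ) + m) with hD
  have hD0 : (0 : ℝ) ≤ D := by positivity
  have step : ∀ t, 1 ≤ t → |dmsN P q (t + 1)| ≤ |dmsN P q t| + D := by
    intro t ht
    have htR : (1 : ℝ) ≤ (t : ℝ) := by exact_mod_cast ht
    have ht0 : (0 : ℝ) < (t : ℝ) := by linarith
    rw [dmsN_rec m P hPii hPrec q t ht]
    have hsplit : Finset.Icc 0 (min m q) = insert 0 (Finset.Icc 1 (min m q)) := by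
      ext j; simp [Finset.mem_Icc]; omega
    rw [hsplit, Finset.sum_insert (by simp)]
    -- bound the j = 0 term
    have h0 : |(m.choose 0 : ℝ) * (dmsX m q 0 t) ^ 0 * (1 - dmsX m q 0 t) ^ (m - 0) *
        dmsN P (q - 0) t| ≤ |dmsN P q t| := by
      simp only [Nat.choose_zero_right, pow_zero, Nat.cast_one, one_mul, mul_one, Nat.sub_zero]
      rcases eq_or_ne (dmsN P q t) 0 with hz | hz
      · simp [hz]
      · have hqmt : q ≤ m * t := by
          by_contra hc
          exact hz (dmsN_supp m hm P hP11 hPii hPrec q t ht (by omega))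
        have hqmtR : (q : ℝ) ≤ (m : ℝ) * t := by exact_mod_cast hqmt
        have hXnn : 0 ≤ dmsX m q 0 t := by
          rw [dmsX]
          apply div_nonneg _ (by positivity)
          push_cast; linarith [Nat.cast_nonneg (α := ℝ) q]
        have hXle : dmsX m q 0 t ≤ 1 := by
          rw [dmsX, div_le_one (by positivity)]
          push_cast
          nlinarith
        rw [abs_mul, abs_pow]
        have : |1 - dmsX m q 0 t| ≤ 1 := by rw [abs_le]; constructor <;> linarith
        calc |1 - dmsX m q 0 t| ^ m * |dmsN P q t| ≤ 1 ^ m * |dmsN P q t| := by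
              gcongr
              all_goals first | exact abs_nonneg _ | exact this
          _ = |dmsN P q t| := by rw [one_pow, one_mul]
    -- bound the j ≥ 1 terms
    have h1 : ∀ j ∈ Finset.Icc 1 (min m q),
        |(m.choose j : ℝ) * (dmsX m q j t) ^ j * (1 - dmsX m q j t) ^ (m - j) *
          dmsN P (q - j) t| ≤ 2 ^ m * B * ((q : ℝ) + m) := by
      intro j hj
      obtain ⟨hj1, hj2⟩ := Finset.mem_Icc.mp hj
      have hjq : j ≤ q := le_trans hj2 (min_le_right _ _)
      have hjcast : ((q - j : ℕ) : ℝ) = (q : ℝ) - j := by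
        rw [Nat.cast_sub hjq]
      rcases eq_or_ne (dmsN P (q - j) t) 0 with hz | hz
      · simp only [hz, mul_zero, abs_zero]; positivity
      · have hqmt : q - j ≤ m * t := by
          by_contra hc
          exact hz (dmsN_supp m hm P hP11 hPii hPrec (q - j) t ht (by omega))
        have hqmtR : (q : ℝ) - j ≤ (m : ℝ) * t := by
          rw [← hjcast]; exact_mod_cast hqmt
        have hXnn : 0 ≤ dmsX m q j t := by
          rw [dmsX]
          apply div_nonneg _ (by positivity)
          have : (0 : ℝ) ≤ (q : ℝ) - j := by
            rw [← hjcast]; positivity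
          linarith
        have hXle : dmsX m q j t ≤ 1 := by
          rw [dmsX, div_le_one (by positivity)]
          nlinarith
        have hXle2 : dmsX m q j t ≤ ((q : ℝ) + m) / t := by
          rw [dmsX]
          have hnum : (q : ℝ) - j + m ≤ (q : ℝ) + m := by
            have : (0 : ℝ) ≤ (j : ℝ) := Nat.cast_nonneg j
            linarith
          have hden : (t : ℝ) ≤ ((m : ℝ) + m) * t := by
            nlinarith [mul_le_mul_of_nonneg_right (show (1 : ℝ) ≤ (m : ℝ) + m by linarith) ht0.le]
          exact div_le_div₀ (by positivity) hnum ht0 hden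
        have hnb := hsm j hj1 hj2 t ht
        rw [abs_mul, abs_mul, abs_mul]
        have e1 : |(m.choose j : ℝ)| = (m.choose j : ℝ) := abs_of_nonneg (by positivity)
        have e2 : |dmsX m q j t ^ j| = dmsX m q j t ^ j := abs_of_nonneg (by positivity)
        have e3 : |1 - dmsX m q j t| ≤ 1 := by rw [abs_le]; constructor <;> linarith
        have e4 : |(1 - dmsX m q j t) ^ (m - j)| ≤ 1 := by
          rw [abs_pow]; exact pow_le_one₀ (abs_nonneg _) e3
        have e5 : dmsX m q j t ^ j ≤ dmsX m q j t := by
          calc dmsX m q j t ^ j ≤ dmsX m q j t ^ 1 :=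
            pow_le_pow_of_le_one hXnn hXle hj1
          _ = dmsX m q j t := pow_one _
        rw [e1, e2]
        calc (m.choose j : ℝ) * dmsX m q j t ^ j * |(1 - dmsX m q j t) ^ (m - j)| *
              |dmsN P (q - j) t|
            ≤ (2 ^ m : ℝ) * dmsX m q j t * 1 * (B * t) := by
              gcongr
              all_goals first
                | exact abs_nonneg _ | exact aux_choose_le m j | positivity
                | exact e4 | exact e5 | exact hnb
          _ = (2 ^ m : ℝ) * (dmsX m q j t * t) * B := by ring
          _ ≤ (2 ^ m : ℝ) * (((q : ℝ) + m) / t * t) * B := by gcongr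
          _ = 2 ^ m * B * ((q : ℝ) + m) := by
              rw [div_mul_cancel₀ _ ht0.ne']; ring
    -- assemble the step
    have hS : |∑ j ∈ Finset.Icc 1 (min m q),
        (m.choose j : ℝ) * (dmsX m q j t) ^ j * (1 - dmsX m q j t) ^ (m - j) *
          dmsN P (q - j) t| ≤ (m : ℝ) * (2 ^ m * B * ((q : ℝ) + m)) := by
      calc |∑ j ∈ Finset.Icc 1 (min m q), _| ≤ ∑ j ∈ Finset.Icc 1 (min m q),
            |(m.choose j : ℝ) * (dmsX m q j t) ^ j * (1 - dmsX m q j t) ^ (m - j) *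
              dmsN P (q - j) t| := Finset.abs_sum_le_sum_abs _ _
        _ ≤ ∑ j ∈ Finset.Icc 1 (min m q), (2 ^ m * B * ((q : ℝ) + m)) :=
            Finset.sum_le_sum h1
        _ = ((min m q : ℝ)) * (2 ^ m * B * ((q : ℝ) + m)) := by
            rw [Finset.sum_const, Nat.card_Icc]
            simp [nsmul_eq_mul]
        _ ≤ (m : ℝ) * (2 ^ m * B * ((q : ℝ) + m)) := by
            gcongr
            all_goals first | positivity | exact_mod_cast min_le_left m q
    have hd : |(if q = 0 then (1 : ℝ) else 0)| ≤ 1 := by split <;> simp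
    calc |(if q = 0 then (1 : ℝ) else 0) +
          ((m.choose 0 : ℝ) * (dmsX m q 0 t) ^ 0 * (1 - dmsX m q 0 t) ^ (m - 0) *
            dmsN P (q - 0) t +
          ∑ j ∈ Finset.Icc 1 (min m q),
            (m.choose j : ℝ) * (dmsX m q j t) ^ j * (1 - dmsX m q j t) ^ (m - j) *
              dmsN P (q - j) t)|
        ≤ |(if q = 0 then (1 : ℝ) else 0)| +
          (|(m.choose 0 : ℝ) * (dmsX m q 0 t) ^ 0 * (1 - dmsX m q 0 t) ^ (m - 0) *
            dmsN P (q - 0) t| +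
          |∑ j ∈ Finset.Icc 1 (min m q),
            (m.choose j : ℝ) * (dmsX m q j t) ^ j * (1 - dmsX m q j t) ^ (m - j) *
              dmsN P (q - j) t|) := by
          refine (abs_add_le _ _).trans ?_
          gcongr
          exact abs_add_le _ _
      _ ≤ |dmsN P q t| + D := by
          rw [hD]; linarith
  -- now induct on t
  intro t ht
  have hcoef : (2 : ℝ) + (m : ℝ) * 2 ^ m * B * ((q : ℝ) + m) = 1 + D := by rw [hD]; ring
  rw [hcoef]
  induction t with
  | zero => omega
  | succ t ih =>
    rcases Nat.eq_zero_or_pos t with ht0 | ht1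
    · subst ht0
      rw [dmsN_one m P hP11 q]
      have : |(if q = m then (1 : ℝ) else 0)| ≤ 1 := by split <;> simp
      push_cast
      nlinarith
    · have h1 := step t ht1
      have h2 := ih ht1
      have : ((t : ℝ) + 1) = ((t + 1 : ℕ) : ℝ) := by push_cast; ring
      push_cast
      nlinarith [(by exact_mod_cast ht1 : (1 : ℝ) ≤ (t : ℝ))]

include hm hP11 hPii hPrec in
lemma dms_bound : ∀ q : ℕ, ∃ C : ℝ, 0 ≤ C ∧
    ∀ q' ≤ q, ∀ t, 1 ≤ t → |dmsN P q' t| ≤ C * t := by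
  intro q
  induction q with
  | zero =>
    refine ⟨2 + (m : ℝ) * 2 ^ m * 0 * ((0 : ℝ) + m), by positivity, ?_⟩
    intro q' hq' t ht
    interval_cases q'
    have := dms_key_step m hm P hP11 hPii hPrec 0 0 le_rfl (fun j hj1 hj2 t ht => by omega) t ht
    simpa using this
  | succ q ih =>
    obtain ⟨C, hC0, hC⟩ := ih
    set C' : ℝ := 2 + (m : ℝ) * 2 ^ m * C * (((q + 1 : ℕ) : ℝ) + m) with hC'
    have hC'0 : 0 ≤ C' := by positivity
    have hnew : ∀ t, 1 ≤ t → |dmsN P (q + 1) t| ≤ C' * t := by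
      apply dms_key_step m hm P hP11 hPii hPrec (q + 1) C hC0
      intro j hj1 hj2 t ht
      exact hC (q + 1 - j) (by omega) t ht
    refine ⟨max C C', le_trans hC0 (le_max_left _ _), ?_⟩
    intro q' hq' t ht
    have htR : (0 : ℝ) ≤ t := Nat.cast_nonneg t
    rcases Nat.lt_or_ge q' (q + 1) with h | h
    · exact le_trans (hC q' (by omega) t ht) (by gcongr; exact le_max_left _ _)
    · have : q' = q + 1 := by omega
      subst this
      exact le_trans (hnew t ht) (by gcongr; exact le_max_right _ _)


set_option maxHeartbeats 2000000 in
include hm hP11 hPii hPrec in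
lemma dms_tendsto : ∀ q : ℕ,
    Filter.Tendsto (fun t : ℕ => dmsN P q t / t) Filter.atTop (nhds (dmsP m q)) := by
  have hm0 : (0 : ℝ) < m := by exact_mod_cast hm
  have hm1 : (1 : ℝ) ≤ m := by exact_mod_cast hm
  intro q
  induction q using Nat.strong_induction_on with
  | _ q IH =>
  obtain ⟨C, hC0, hC⟩ := dms_bound m hm P hP11 hPii hPrec q
  set α : ℝ := ((q : ℝ) + m) / 2 with hα
  set γ : ℝ := (if q = 0 then (1 : ℝ) else 0) +
      (if q = 0 then 0 else ((q : ℝ) + m - 1) / 2 * dmsP m (q - 1)) with hγ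
  have hα0 : 0 ≤ α := by positivity
  -- denominators
  have hd1 : (0 : ℝ) < (q : ℝ) + m := by positivity
  -- the key identity γ = p q (1 + α)
  have hid : γ = dmsP m q * (1 + α) := by
    rcases Nat.eq_zero_or_pos q with hq0 | hq1
    · subst hq0
      simp only [hγ, hα, dmsP, if_true]
      norm_num
      field_simp
      ring
    · have hq1R : (1 : ℝ) ≤ q := by exact_mod_cast hq1
      have hcast : ((q - 1 : ℕ) : ℝ) = (q : ℝ) - 1 := by
        rw [Nat.cast_sub hq1]; norm_num
      have hqne : q ≠ 0 := by omega
      simp only [hγ, hα, dmsP, hcast, if_neg hqne]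
      have d1 : (q : ℝ) - 1 + m ≠ 0 := by nlinarith
      have d2 : (q : ℝ) - 1 + m + 1 ≠ 0 := by nlinarith
      have d3 : (q : ℝ) - 1 + m + 2 ≠ 0 := by nlinarith
      have d4 : (q : ℝ) + m ≠ 0 := by nlinarith
      have d5 : (q : ℝ) + m + 1 ≠ 0 := by nlinarith
      have d6 : (q : ℝ) + m + 2 ≠ 0 := by nlinarith
      field_simp
      ring
  -- the per-term functions
  set H : ℕ → ℕ → ℝ := fun j t =>
    if j = 0 then ((1 - dmsX m q 0 t) ^ m - 1 + m * dmsX m q 0 t) * dmsN P q t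
    else (m.choose j : ℝ) * (dmsX m q j t) ^ j * (1 - dmsX m q j t) ^ (m - j) *
      dmsN P (q - j) t with hH
  set L : ℕ → ℝ := fun j =>
    if j = 1 then ((q : ℝ) + m - 1) / 2 * dmsP m (q - 1) else 0 with hL
  -- per-term limits
  have hterm : ∀ j ∈ Finset.Icc 0 (min m q),
      Filter.Tendsto (fun t => H j t) Filter.atTop (nhds (L j)) := by
    intro j hj
    have hjm : j ≤ m := le_trans (Finset.mem_Icc.mp hj).2 (min_le_left _ _)
    have hjq : j ≤ q := le_trans (Finset.mem_Icc.mp hj).2 (min_le_right _ _)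
    have hjcast : ((q - j : ℕ) : ℝ) = (q : ℝ) - j := by rw [Nat.cast_sub hjq]
    -- common facts about X on large t
    have hXfacts : ∀ t : ℕ, q + m ≤ t → 1 ≤ t →
        0 ≤ dmsX m q j t ∧ dmsX m q j t ≤ 1 ∧ dmsX m q j t ≤ ((q : ℝ) + m) / t := by
      intro t ht ht1
      have ht0 : (0 : ℝ) < t := by positivity
      have htR : (q : ℝ) + m ≤ t := by exact_mod_cast ht
      have hjR : (0 : ℝ) ≤ (j : ℝ) := Nat.cast_nonneg j
      have hqjR : (0 : ℝ) ≤ (q : ℝ) - j := by rw [← hjcast]; positivity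
      refine ⟨?_, ?_, ?_⟩
      · rw [dmsX]; apply div_nonneg (by linarith) (by positivity)
      · rw [dmsX, div_le_one (by positivity)]
        nlinarith
      · rw [dmsX]
        have hden : (t : ℝ) ≤ ((m : ℝ) + m) * t := by nlinarith
        exact div_le_div₀ (by positivity) (by linarith) ht0 hden
    rcases Nat.eq_zero_or_pos j with hj0 | hjpos
    · -- j = 0 : second-order error term, tends to 0
      subst hj0
      have hL0 : L 0 = 0 := by rw [hL]; norm_num
      rw [hL0]
      apply squeeze_zero_norm'
        (a := fun t : ℕ => ((m : ℝ) ^ 2 * ((q : ℝ) + m) ^ 2 * C) / t)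
      · filter_upwards [Filter.eventually_ge_atTop (q + m),
          Filter.eventually_ge_atTop 1] with t ht ht1
        obtain ⟨hX0, hX1, hX2⟩ := hXfacts t ht ht1
        have ht0 : (0 : ℝ) < t := by positivity
        have hpow := aux_pow_bound m (dmsX m q 0 t) hX0 hX1
        have hnb := hC q le_rfl t ht1
        simp only [hH, if_pos rfl, Real.norm_eq_abs]
        rw [abs_mul]
        calc |(1 - dmsX m q 0 t) ^ m - 1 + ↑m * dmsX m q 0 t| * |dmsN P q t|
            ≤ ((m : ℝ) ^ 2 * dmsX m q 0 t ^ 2) * (C * t) := by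
              gcongr
              all_goals first | exact abs_nonneg _ | exact hpow | exact hnb | positivity
          _ ≤ ((m : ℝ) ^ 2 * (((q : ℝ) + m) / t) ^ 2) * (C * t) := by gcongr
          _ = ((m : ℝ) ^ 2 * ((q : ℝ) + m) ^ 2 * C) / t := by
              field_simp
      · exact tendsto_const_div_atTop_nhds_zero_nat _
    rcases Nat.lt_or_ge j 2 with hj1 | hj2
    · -- j = 1 : main term
      have hj1' : j = 1 := by omega
      subst hj1'
      have hq1 : 1 ≤ q := hjq
      have hLval : L 1 = ((q : ℝ) + m - 1) / 2 * dmsP m (q - 1) := by simp [hL]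
      rw [hLval]
      have hXto0 : Filter.Tendsto (fun t : ℕ => dmsX m q 1 t) Filter.atTop (nhds 0) := by
        have := tendsto_const_div_atTop_nhds_zero_nat
          (((q : ℝ) - 1 + m) / ((m : ℝ) + m))
        apply this.congr
        intro t
        rw [dmsX, div_div]
        norm_num
      have hpow1 : Filter.Tendsto (fun t : ℕ => (1 - dmsX m q 1 t) ^ (m - 1))
          Filter.atTop (nhds 1) := by
        have h1 : Filter.Tendsto (fun t : ℕ => 1 - dmsX m q 1 t) Filter.atTop (nhds 1) := by
          simpa using (tendsto_const_nhds (x := (1 : ℝ))).sub hXto0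
        simpa using h1.pow (m - 1)
      have hIH := IH (q - 1) (by omega)
      have hmain : Filter.Tendsto
          (fun t : ℕ => ((q : ℝ) + m - 1) / 2 * (dmsN P (q - 1) t / t) *
            (1 - dmsX m q 1 t) ^ (m - 1))
          Filter.atTop (nhds (((q : ℝ) + m - 1) / 2 * dmsP m (q - 1) * 1)) :=
        (hIH.const_mul _).mul hpow1
      rw [mul_one] at hmain
      apply hmain.congr'
      filter_upwards [Filter.eventually_ge_atTop 1] with t ht1
      have ht0 : (0 : ℝ) < t := by exact_mod_cast Nat.lt_of_lt_of_le Nat.zero_lt_one ht1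
      simp only [hH, Nat.choose_one_right, pow_one, if_neg (one_ne_zero)]
      rw [dmsX]
      push_cast
      field_simp
      ring
    · -- j ≥ 2 : negligible terms
      have hL0 : L j = 0 := by
        have hj1 : j ≠ 1 := by omega
        simp [hL, hj1]
      rw [hL0]
      apply squeeze_zero_norm'
        (a := fun t : ℕ => ((2 : ℝ) ^ m * ((q : ℝ) + m) ^ 2 * C) / t)
      · filter_upwards [Filter.eventually_ge_atTop (q + m),
          Filter.eventually_ge_atTop 1] with t ht ht1
        obtain ⟨hX0, hX1, hX2⟩ := hXfacts t ht ht1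
        have ht0 : (0 : ℝ) < t := by positivity
        have hnb := hC (q - j) (by omega) t ht1
        have hXj : dmsX m q j t ^ j ≤ dmsX m q j t ^ 2 :=
          pow_le_pow_of_le_one hX0 hX1 hj2
        have habs1 : |(1 - dmsX m q j t) ^ (m - j)| ≤ 1 := by
          rw [abs_pow]
          apply pow_le_one₀ (abs_nonneg _)
          rw [abs_le]; constructor <;> linarith
        have hjne : j ≠ 0 := by omega
        simp only [hH, if_neg hjne, Real.norm_eq_abs]
        rw [abs_mul, abs_mul, abs_mul,
          abs_of_nonneg (show (0:ℝ) ≤ (m.choose j : ℝ) by positivity),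
          abs_of_nonneg (show (0:ℝ) ≤ dmsX m q j t ^ j by positivity)]
        calc (m.choose j : ℝ) * dmsX m q j t ^ j * |(1 - dmsX m q j t) ^ (m - j)| *
              |dmsN P (q - j) t|
            ≤ (2 : ℝ) ^ m * dmsX m q j t ^ 2 * 1 * (C * t) := by
              gcongr
              all_goals first
                | exact abs_nonneg _ | exact aux_choose_le m j
                | exact hXj | exact habs1 | exact hnb | positivity
          _ ≤ (2 : ℝ) ^ m * (((q : ℝ) + m) / t) ^ 2 * 1 * (C * t) := by gcongr
          _ = ((2 : ℝ) ^ m * ((q : ℝ) + m) ^ 2 * C) / t := by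
              field_simp
      · exact tendsto_const_div_atTop_nhds_zero_nat _
  -- the drift function g tends to γ
  have hg : Filter.Tendsto
      (fun t : ℕ => dmsN P q (t + 1) - dmsN P q t + α / t * dmsN P q t)
      Filter.atTop (nhds γ) := by
    have hsum : Filter.Tendsto (fun t : ℕ => ∑ j ∈ Finset.Icc 0 (min m q), H j t)
        Filter.atTop (nhds (∑ j ∈ Finset.Icc 0 (min m q), L j)) :=
      tendsto_finset_sum _ hterm
    have hLsum : (if q = 0 then (1 : ℝ) else 0) + ∑ j ∈ Finset.Icc 0 (min m q), L j = γ := by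
      rcases Nat.eq_zero_or_pos q with hq0 | hq1
      · subst hq0
        simp [hL, hγ]
      · have h1mem : 1 ∈ Finset.Icc 0 (min m q) := by
          rw [Finset.mem_Icc]
          omega
        have : ∑ j ∈ Finset.Icc 0 (min m q), L j = L 1 := by
          rw [hL]
          rw [Finset.sum_ite_eq' (Finset.Icc 0 (min m q)) 1
            (fun _ => ((q : ℝ) + m - 1) / 2 * dmsP m (q - 1))]
          simp [h1mem]
        have hqne : q ≠ 0 := by omega
        rw [this, hγ]
        simp [hL, hqne]
    have h2 : Filter.Tendsto
        (fun t : ℕ => (if q = 0 then (1 : ℝ) else 0) + ∑ j ∈ Finset.Icc 0 (min m q), H j t)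
        Filter.atTop (nhds γ) := by
      rw [← hLsum]
      exact tendsto_const_nhds.add hsum
    apply h2.congr'
    filter_upwards [Filter.eventually_ge_atTop 1] with t ht1
    have ht0 : (0 : ℝ) < t := by exact_mod_cast Nat.lt_of_lt_of_le Nat.zero_lt_one ht1
    rw [dmsN_rec m P hPii hPrec q t ht1]
    have hsplit : Finset.Icc 0 (min m q) = insert 0 (Finset.Icc 1 (min m q)) := by
      ext j; simp [Finset.mem_Icc]; omega
    rw [hsplit, Finset.sum_insert (by simp), Finset.sum_insert (by simp)]
    have hrest : ∑ j ∈ Finset.Icc 1 (min m q),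
        (m.choose j : ℝ) * (dmsX m q j t) ^ j * (1 - dmsX m q j t) ^ (m - j) *
          dmsN P (q - j) t = ∑ j ∈ Finset.Icc 1 (min m q), H j t := by
      apply Finset.sum_congr rfl
      intro j hj
      have : j ≠ 0 := by
        have := (Finset.mem_Icc.mp hj).1
        omega
      simp only [hH, if_neg this]
    rw [← hrest]
    have hH0 : H 0 t = ((1 - dmsX m q 0 t) ^ m - 1 + m * dmsX m q 0 t) * dmsN P q t := by
      simp only [hH, if_pos rfl]
    have hterm0 : (m.choose 0 : ℝ) * (dmsX m q 0 t) ^ 0 * (1 - dmsX m q 0 t) ^ (m - 0) *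
        dmsN P (q - 0) t = (1 - dmsX m q 0 t) ^ m * dmsN P q t := by
      simp
    have hαt : α / t = (m : ℝ) * dmsX m q 0 t := by
      rw [hα, dmsX]
      push_cast
      field_simp
      ring
    rw [hterm0, hH0, hαt]
    ring
  -- conclude via the Cesàro step lemma
  set u : ℕ → ℝ := fun t => dmsN P q t - dmsP m q * t with hu
  set ε : ℕ → ℝ := fun t => u (t + 1) - (1 - α / t) * u t with hε
  have hεlim : Filter.Tendsto ε Filter.atTop (nhds 0) := by
    have h1 : Filter.Tendsto
        (fun t : ℕ => (dmsN P q (t + 1) - dmsN P q t + α / t * dmsN P q t) - γ)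
        Filter.atTop (nhds 0) := by
      simpa using hg.sub (tendsto_const_nhds (x := γ))
    apply h1.congr'
    filter_upwards [Filter.eventually_ge_atTop 1] with t ht1
    have ht0 : (0 : ℝ) < t := by exact_mod_cast Nat.lt_of_lt_of_le Nat.zero_lt_one ht1
    simp only [hε, hu]
    rw [hid]
    push_cast
    field_simp
    ring
  have hstep : ∀ᶠ t : ℕ in Filter.atTop, |u (t + 1)| ≤ |u t| + |ε t| := by
    filter_upwards [Filter.eventually_ge_atTop (q + m)] with t ht
    have htm : (1:ℕ) ≤ q + m := by omega
    have ht1 : 1 ≤ t := le_trans htm ht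
    have ht0 : (0 : ℝ) < t := by exact_mod_cast Nat.lt_of_lt_of_le Nat.zero_lt_one ht1
    have htR : (q : ℝ) + m ≤ t := by exact_mod_cast ht
    have hfrac0 : 0 ≤ α / t := by positivity
    have hfrac1 : α / t ≤ 1 := by
      rw [div_le_one ht0, hα]
      linarith
    have habs : |1 - α / t| ≤ 1 := by rw [abs_le]; constructor <;> linarith
    have hue : u (t + 1) = (1 - α / t) * u t + ε t := by rw [hε]; ring
    rw [hue]
    calc |(1 - α / t) * u t + ε t| ≤ |(1 - α / t) * u t| + |ε t| := abs_add_le _ _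
      _ = |1 - α / t| * |u t| + |ε t| := by rw [abs_mul]
      _ ≤ 1 * |u t| + |ε t| := by gcongr <;> first | exact abs_nonneg _ | exact habs
      _ = |u t| + |ε t| := by rw [one_mul]
  have hu0 := aux_cesaro_step u ε hεlim hstep
  have hfinal := hu0.add (tendsto_const_nhds (x := dmsP m q))
  rw [zero_add] at hfinal
  apply hfinal.congr'
  filter_upwards [Filter.eventually_ge_atTop 1] with t ht1
  have ht0 : (0 : ℝ) < t := by exact_mod_cast Nat.lt_of_lt_of_le Nat.zero_lt_one ht1
  simp only [hu]
  field_simp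
  ring

end lemmas


lemma aux_part2 (m : ℕ) (hm : 1 ≤ m) :
    Filter.Tendsto
      (fun q : ℕ => (q : ℝ) ^ 3 *
        (2 * (m : ℝ) * ((m : ℝ) + 1) /
          (((q : ℝ) + m) * ((q : ℝ) + m + 1) * ((q : ℝ) + m + 2))))
      Filter.atTop (nhds (2 * (m : ℝ) * ((m : ℝ) + 1))) := by
  have hmpos : (0 : ℝ) < m := by exact_mod_cast hm
  have h1 := tendsto_natCast_div_add_atTop (𝕜 := ℝ) (m : ℝ)
  have h2 := tendsto_natCast_div_add_atTop (𝕜 := ℝ) ((m : ℝ) + 1)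
  have h3 := tendsto_natCast_div_add_atTop (𝕜 := ℝ) ((m : ℝ) + 2)
  have key := ((h1.mul h2).mul h3).const_mul (2 * (m : ℝ) * ((m : ℝ) + 1))
  simp only [mul_one] at key
  refine key.congr (fun q => ?_)
  have d1 : (q : ℝ) + m ≠ 0 := by positivity
  have d2 : (q : ℝ) + m + 1 ≠ 0 := by positivity
  have d3 : (q : ℝ) + m + 2 ≠ 0 := by positivity
  have e2 : (q : ℝ) + ((m : ℝ) + 1) = (q : ℝ) + m + 1 := by ring
  have e3 : (q : ℝ) + ((m : ℝ) + 2) = (q : ℝ) + m + 2 := by ring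
  rw [e2, e3]
  field_simp

/-- in the special case `A = m`, the steady-state degree distribution
exists and equals `2m(m+1)/((q+m)(q+m+1)(q+m+2))`, which decays like `2m(m+1) q⁻³`. -/
theorem dms_steady_state_A_eq_m
    (m : ℕ) (hm : 1 ≤ m)
    (P : ℕ → ℕ → ℕ → ℝ)
    (hP11 : ∀ q : ℕ, P q 1 1 = if q = m then 1 else 0)
    (hPii : ∀ q i : ℕ, 2 ≤ i → P q i i = if q = 0 then 1 else 0)
    (hPrec : ∀ q i t : ℕ, 1 ≤ i → i ≤ t →
      P q i (t + 1) = ∑ j ∈ Finset.Icc 0 (min m q),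
        (m.choose j : ℝ) * (((q : ℝ) - (j : ℝ) + (m : ℝ)) / (((m : ℝ) + (m : ℝ)) * t)) ^ j *
          (1 - ((q : ℝ) - (j : ℝ) + (m : ℝ)) / (((m : ℝ) + (m : ℝ)) * t)) ^ (m - j) *
          P (q - j) i t)
    (Pnet : ℕ → ℕ → ℝ)
    (hPnet : ∀ q t : ℕ, 1 ≤ t →
      Pnet q t = (1 / (t : ℝ)) * ∑ i ∈ Finset.Icc 1 t, P q i t) :
    (∀ q : ℕ,
      Filter.Tendsto (fun t : ℕ => Pnet q t) Filter.atTop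
        (nhds (2 * (m : ℝ) * ((m : ℝ) + 1) /
          (((q : ℝ) + m) * ((q : ℝ) + m + 1) * ((q : ℝ) + m + 2))))) ∧
    Filter.Tendsto
      (fun q : ℕ => (q : ℝ) ^ 3 *
        (2 * (m : ℝ) * ((m : ℝ) + 1) /
          (((q : ℝ) + m) * ((q : ℝ) + m + 1) * ((q : ℝ) + m + 2))))
      Filter.atTop (nhds (2 * (m : ℝ) * ((m : ℝ) + 1))) := by
  constructor
  · intro q
    have h := dms_tendsto m hm P hP11 hPii hPrec q
    have h2 : Filter.Tendsto (fun t : ℕ => Pnet q t) Filter.atTop (nhds (dmsP m q)) := by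
      apply h.congr'
      filter_upwards [Filter.eventually_ge_atTop 1] with t ht
      rw [hPnet q t ht]
      rw [dmsN.eq_def]
      ring
    simpa [dmsP] using h2
  · exact aux_part2 m hm
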